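/- Let θ > 0, δ ≥ 0, c > 2, and set τ = min{δ, (c−2)·θ}/(c·θ), so τ < 1. Let OPT and V be real numbers with OPT ≤ −θ and OPT ≤ V ≤ (1−τ)·OPT, and set G^a = −θ − V. Then at least one of the following holds: (C.1) G^a > θ; or (C.2) V ≤ OPT + δ. (In words: solving the linearized subproblem to relative error τ guarantees either the large-gap condition or δ-suboptimality.) -/
import Mathlib


/-- Solving the linearized subproblem to relative error `τ = min{δ, (c-2)θ}/(cθ)`
guarantees either the large-gap condition `Gᵃ > θ` or `δ`-suboptimality. -/
theorem stmt_14 (θ δ c : ℝ) (hθ : 0 < θ) (hδ : 0 ≤ δ) (hc : 2 < c)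
    (τ : ℝ) (hτ : τ = min δ ((c - 2) * θ) / (c * θ))
    (OPT V Ga : ℝ) (hOPT : OPT ≤ -θ)
    (hlb : OPT ≤ V) (hub : V ≤ (1 - τ) * OPT)
    (hGa : Ga = -θ - V) :
    τ < 1 ∧ (θ < Ga ∨ V ≤ OPT + δ) := by
  have hcθ : 0 < c * θ := mul_pos (by linarith) hθ
  set m := min δ ((c - 2) * θ) with hm
  have hm2 : m ≤ (c - 2) * θ := min_le_right _ _
  have hm1 : m ≤ δ := min_le_left _ _
  have hm0 : 0 ≤ m := le_min hδ (by nlinarith)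
  have hτcθ : τ * (c * θ) = m := by rw [hτ]; field_simp
  have hτ1 : τ < 1 := by
    rw [hτ, div_lt_one hcθ]; nlinarith
  refine ⟨hτ1, ?_⟩
  by_contra h
  push_neg at h
  obtain ⟨h1, h2⟩ := h
  subst hGa
  -- h1 : -θ - V ≤ θ, so V ≥ -2θ
  rcases eq_or_lt_of_le hm0 with hm0' | hm0'
  · -- m = 0, so τ = 0, V ≤ OPT, but OPT + δ < V and δ ≥ m... need δ could be > 0
    have hτ0 : τ = 0 := by
      have := hτcθ; rw [← hm0'] at this; exact (mul_eq_zero.mp this).resolve_right (by positivity)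
    rw [hτ0] at hub
    -- V ≤ OPT, and OPT + δ < V → δ < 0? no, m = 0 means δ = 0 or (c-2)θ = 0; latter impossible
    have : (c - 2) * θ > 0 := by nlinarith
    have hδ0 : δ = 0 := by
      by_contra hδne
      have hδpos : 0 < δ := lt_of_le_of_ne hδ (Ne.symm hδne)
      have h6 : 0 < m := lt_min hδpos this
      linarith
    linarith
  · -- m > 0: τ(-OPT) ≥ V - OPT > δ ≥ m ⟹ -OPT > cθ ⟹ V < -2θ
    have hτpos : 0 < τ := by
      have := div_pos hm0' hcθ
      rwa [hτ]
    have hVO : δ < V - OPT := by linarith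
    have h3 : τ * (-OPT) ≥ V - OPT := by nlinarith
    have h4 : τ * (-OPT) > m := by linarith
    have h5 : -OPT > c * θ := by
      by_contra h5'
      push_neg at h5'
      nlinarith
    -- V ≤ (1-τ)OPT < -(1-τ)cθ = -cθ + τcθ = -cθ + m ≤ -2θ
    have : V < -2 * θ := by nlinarith
    linarith
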